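/- Let h₁, …, h_n : (A,κ) → (B,λ) and β₁, …, β_n : (C,ω) → (A,κ) be digitally continuous maps such that β_i ≃ β_{i+1} (digitally (ω,κ)-homotopic) for every i ∈ {1,…,n−1}. Then D_m(h₁∘β₁, …, h_n∘β_n) ≤ D_m(h₁,…,h_n). -/

import Mathlib

namespace DigitalTop

/-- The `c_p`-adjacency relation on `ℤ^r`: distinct points such that at most `p`
coordinates differ by exactly `1`, and all coordinates not differing by `1` are equal. -/
def cAdj (r p : ℕ) (a a' : Fin r → ℤ) : Prop :=
  a ≠ a' ∧
  ((Finset.univ.filter fun q : Fin r => |a q - a' q| = 1).card ≤ p) ∧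
  ∀ s : Fin r, |a s - a' s| ≠ 1 → a s = a' s

/-- The `2`-adjacency on the digital interval in `ℤ`. -/
def intAdj (t t' : ℤ) : Prop := |t - t'| = 1

/-- Digital `(adjA, adjB)`-continuity of `f` on `A`, mapping into `B`. -/
def DigContinuousOn {α β : Type*} (adjA : α → α → Prop) (adjB : β → β → Prop)
    (A : Set α) (B : Set β) (f : α → β) : Prop :=
  (∀ a ∈ A, f a ∈ B) ∧
  ∀ a ∈ A, ∀ a' ∈ A, adjA a a' → f a = f a' ∨ adjB (f a) (f a')

/-- `K : A × [0,z]_ℤ → B` is a digital homotopy (in `z` steps): each stage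
`K (·, t)` is digitally continuous and each track `K (a, ·)` is digitally
`(2, adjB)`-continuous on `[0,z]_ℤ`. -/
def IsDigHomotopy {α β : Type*} (adjA : α → α → Prop) (adjB : β → β → Prop)
    (A : Set α) (B : Set β) (z : ℕ) (K : α → ℤ → β) : Prop :=
  (∀ t ∈ Set.Icc (0 : ℤ) (z : ℤ), DigContinuousOn adjA adjB A B fun a => K a t) ∧
  ∀ a ∈ A, ∀ t ∈ Set.Icc (0 : ℤ) (z : ℤ), ∀ t' ∈ Set.Icc (0 : ℤ) (z : ℤ),
    intAdj t t' → K a t = K a t' ∨ adjB (K a t) (K a t')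

/-- `h` and `k` are digitally `(adjA, adjB)`-homotopic on `A` (into `B`). -/
def DigHomotopic {α β : Type*} (adjA : α → α → Prop) (adjB : β → β → Prop)
    (A : Set α) (B : Set β) (h k : α → β) : Prop :=
  ∃ (z : ℕ) (K : α → ℤ → β),
    IsDigHomotopy adjA adjB A B z K ∧
    (∀ a ∈ A, K a 0 = h a) ∧ (∀ a ∈ A, K a (z : ℤ) = k a)

/-- `(A, adjA)` is digitally connected: any two points of `A` are joined by a
digital path in `A` whose consecutive points are equal or adjacent. -/
def DigConnected {α : Type*} (adjA : α → α → Prop) (A : Set α) : Prop :=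
  ∀ a ∈ A, ∀ b ∈ A, ∃ (n : ℕ) (f : ℕ → α),
    f 0 = a ∧ f n = b ∧ (∀ i ≤ n, f i ∈ A) ∧
    ∀ i < n, f i = f (i + 1) ∨ adjA (f i) (f (i + 1))

/-- `adj ≥_d adj'`: `adj` dominates `adj'`. -/
def Dominates {α : Type*} (adj adj' : α → α → Prop) : Prop :=
  ∀ a a', adj a a' → adj' a a'

/-- The normal (strong) product adjacency `NP(adjA, adjB)` on a product. -/
def NP {α β : Type*} (adjA : α → α → Prop) (adjB : β → β → Prop) :
    α × β → α × β → Prop :=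
  fun x y => x ≠ y ∧ (x.1 = y.1 ∨ adjA x.1 y.1) ∧ (x.2 = y.2 ∨ adjB x.2 y.2)

/-- The normal (strong) product adjacency `NP_n(adjB, …, adjB)` on `Bⁿ`. -/
def NPn {β : Type*} (adjB : β → β → Prop) (n : ℕ) :
    (Fin n → β) → (Fin n → β) → Prop :=
  fun x y => x ≠ y ∧ ∀ i, x i = y i ∨ adjB (x i) (y i)

/-- `X` satisfies the digital `m`-homotopic-distance condition for `h, k`: every
digitally continuous map `φ` from every `m`-dimensional digital complex `(P, c_δ)`
into `X` satisfies `h ∘ φ ≃ k ∘ φ`. -/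
def DmAt {α β : Type*} (m : ℕ) (adjA : α → α → Prop) (adjB : β → β → Prop)
    (X : Set α) (B : Set β) (h k : α → β) : Prop :=
  ∀ P : Set (Fin m → ℤ), P.Finite →
    ∀ δ : ℕ, 1 ≤ δ → δ ≤ m →
      ∀ φ : (Fin m → ℤ) → α,
        DigContinuousOn (cAdj m δ) adjA P X φ →
        DigHomotopic (cAdj m δ) adjB P B (h ∘ φ) (k ∘ φ)

/-- The digital `m`-homotopic distance `D_m(h, k)` (an element of `ℕ∞`,
`⊤` if no finite decomposition exists). -/
noncomputable def Dm {α β : Type*} (m : ℕ) (adjA : α → α → Prop) (adjB : β → β → Prop)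
    (A : Set α) (B : Set β) (h k : α → β) : ℕ∞ :=
  sInf {n : ℕ∞ | ∃ q : ℕ, n = (q : ℕ∞) ∧ ∃ X : Fin (q + 1) → Set α,
    A = ⋃ j, X j ∧ ∀ j, DmAt m adjA adjB (X j) B h k}

/-- The digital homotopic distance `D(h, k)`. -/
noncomputable def Ddist {α β : Type*} (adjA : α → α → Prop) (adjB : β → β → Prop)
    (A : Set α) (B : Set β) (h k : α → β) : ℕ∞ :=
  sInf {n : ℕ∞ | ∃ q : ℕ, n = (q : ℕ∞) ∧ ∃ X : Fin (q + 1) → Set α,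
    A = ⋃ j, X j ∧ ∀ j, DigHomotopic adjA adjB (X j) B h k}

/-- `X` satisfies the digital higher `m`-homotopic-distance condition for
`h₁, …, h_n`: pushed forward along any `φ` from an `m`-dimensional digital
complex into `X`, consecutive maps become digitally homotopic. -/
def DmAtH {α β : Type*} (m : ℕ) (adjA : α → α → Prop) (adjB : β → β → Prop)
    (X : Set α) (B : Set β) {n : ℕ} (h : Fin n → α → β) : Prop :=
  ∀ P : Set (Fin m → ℤ), P.Finite →
    ∀ δ : ℕ, 1 ≤ δ → δ ≤ m →
      ∀ φ : (Fin m → ℤ) → α,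
        DigContinuousOn (cAdj m δ) adjA P X φ →
        ∀ i : Fin n, ∀ hi : (i : ℕ) + 1 < n,
          DigHomotopic (cAdj m δ) adjB P B (h i ∘ φ) (h ⟨(i : ℕ) + 1, hi⟩ ∘ φ)

/-- The digital higher `m`-homotopic distance `D_m(h₁, …, h_n)`. -/
noncomputable def DmH {α β : Type*} (m : ℕ) (adjA : α → α → Prop) (adjB : β → β → Prop)
    (A : Set α) (B : Set β) {n : ℕ} (h : Fin n → α → β) : ℕ∞ :=
  sInf {k : ℕ∞ | ∃ q : ℕ, k = (q : ℕ∞) ∧ ∃ X : Fin (q + 1) → Set α,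
    A = ⋃ j, X j ∧ ∀ j, DmAtH m adjA adjB (X j) B h}

/-- The digital higher homotopic distance `D(h₁, …, h_n)`. -/
noncomputable def DdistH {α β : Type*} (adjA : α → α → Prop) (adjB : β → β → Prop)
    (A : Set α) (B : Set β) {n : ℕ} (h : Fin n → α → β) : ℕ∞ :=
  sInf {k : ℕ∞ | ∃ q : ℕ, k = (q : ℕ∞) ∧ ∃ X : Fin (q + 1) → Set α,
    A = ⋃ j, X j ∧ ∀ j, ∀ i : Fin n, ∀ hi : (i : ℕ) + 1 < n,
      DigHomotopic adjA adjB (X j) B (h i) (h ⟨(i : ℕ) + 1, hi⟩)}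

/-- `X` satisfies the digital `m`-LS-category condition in `A`: for every `φ` from an
`m`-dimensional digital complex into `X`, the composite with the inclusion
`X ↪ A` is digitally nullhomotopic in `A`. -/
def CatmAt {α : Type*} (m : ℕ) (adjA : α → α → Prop) (X A : Set α) : Prop :=
  ∀ P : Set (Fin m → ℤ), P.Finite →
    ∀ δ : ℕ, 1 ≤ δ → δ ≤ m →
      ∀ φ : (Fin m → ℤ) → α,
        DigContinuousOn (cAdj m δ) adjA P X φ →
        ∃ a₀ ∈ A, DigHomotopic (cAdj m δ) adjA P A φ (fun _ => a₀)

/-- The digital `m`-Lusternik–Schnirelmann category `cat_m(A, adjA)`. -/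
noncomputable def Catm {α : Type*} (m : ℕ) (adjA : α → α → Prop) (A : Set α) : ℕ∞ :=
  sInf {n : ℕ∞ | ∃ q : ℕ, n = (q : ℕ∞) ∧ ∃ X : Fin (q + 1) → Set α,
    A = ⋃ j, X j ∧ ∀ j, CatmAt m adjA (X j) A}

/-- `X` satisfies the digital `m`-LS-category condition for the map `h`. -/
def CatmMapAt {α β : Type*} (m : ℕ) (adjA : α → α → Prop) (adjB : β → β → Prop)
    (X : Set α) (B : Set β) (h : α → β) : Prop :=
  ∀ P : Set (Fin m → ℤ), P.Finite →
    ∀ δ : ℕ, 1 ≤ δ → δ ≤ m →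
      ∀ φ : (Fin m → ℤ) → α,
        DigContinuousOn (cAdj m δ) adjA P X φ →
        ∃ b₀ ∈ B, DigHomotopic (cAdj m δ) adjB P B (h ∘ φ) (fun _ => b₀)

/-- The digital `m`-Lusternik–Schnirelmann category `cat_m(h; adjA, adjB)` of a map. -/
noncomputable def CatmMap {α β : Type*} (m : ℕ) (adjA : α → α → Prop) (adjB : β → β → Prop)
    (A : Set α) (B : Set β) (h : α → β) : ℕ∞ :=
  sInf {n : ℕ∞ | ∃ q : ℕ, n = (q : ℕ∞) ∧ ∃ X : Fin (q + 1) → Set α,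
    A = ⋃ j, X j ∧ ∀ j, CatmMapAt m adjA adjB (X j) B h}

/-- The digital path space `A^{[0,z]_ℤ}`: digitally `(2, adjA)`-continuous maps
`[0,z]_ℤ → A`. -/
def PathSpace {α : Type*} (adjA : α → α → Prop) (A : Set α) (z : ℕ) : Set (ℤ → α) :=
  {ϑ | DigContinuousOn intAdj adjA (Set.Icc (0 : ℤ) (z : ℤ)) A ϑ}

/-- The adjacency on the digital path space `A^{[0,z]_ℤ}`. -/
def pathAdj {α : Type*} (adjA : α → α → Prop) (z : ℕ) : (ℤ → α) → (ℤ → α) → Prop :=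
  fun ϑ θ => ∀ t ∈ Set.Icc (0 : ℤ) (z : ℤ), ∀ t' ∈ Set.Icc (0 : ℤ) (z : ℤ),
    (t = t' ∨ intAdj t t') → ϑ t = θ t' ∨ adjA (ϑ t) (θ t')

/-- The digital `m`-topological complexity `TC^m(A, adjA)`: the least `q` such
that `A × A = X_0 ∪ ⋯ ∪ X_q` where each `X_j` carries a digitally continuous
`s_j : X_j → A^{[0,z]_ℤ}` with `π ∘ s_j ∘ φ ≃ φ` for every digitally continuous
`φ : P → X_j` from every `m`-dimensional digital complex `(P, c_δ)`. -/
noncomputable def TCm {α : Type*} (m : ℕ) (adjA : α → α → Prop) (A : Set α) : ℕ∞ :=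
  sInf {n : ℕ∞ | ∃ q : ℕ, n = (q : ℕ∞) ∧ ∃ X : Fin (q + 1) → Set (α × α),
    (A ×ˢ A) = ⋃ j, X j ∧
    ∀ j, ∃ (z : ℕ) (s : α × α → ℤ → α),
      DigContinuousOn (NP adjA adjA) (pathAdj adjA z) (X j) (PathSpace adjA A z) s ∧
      ∀ P : Set (Fin m → ℤ), P.Finite →
        ∀ δ : ℕ, 1 ≤ δ → δ ≤ m →
          ∀ φ : (Fin m → ℤ) → α × α,
            DigContinuousOn (cAdj m δ) (NP adjA adjA) P (X j) φ →
            DigHomotopic (cAdj m δ) (NP adjA adjA) P (A ×ˢ A)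
              (fun x => (s (φ x) 0, s (φ x) (z : ℤ))) φ}

/-- The digital `m`-topological complexity `TC^m(h; adjA, adjB)` of a map
`h : (A, adjA) → (B, adjB)`, using `π_h(ϑ) = (ϑ(0), h(ϑ(z)))`. -/
noncomputable def TCmMap {α β : Type*} (m : ℕ) (adjA : α → α → Prop) (adjB : β → β → Prop)
    (A : Set α) (B : Set β) (h : α → β) : ℕ∞ :=
  sInf {n : ℕ∞ | ∃ q : ℕ, n = (q : ℕ∞) ∧ ∃ X : Fin (q + 1) → Set (α × β),
    (A ×ˢ B) = ⋃ j, X j ∧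
    ∀ j, ∃ (z : ℕ) (s : α × β → ℤ → α),
      DigContinuousOn (NP adjA adjB) (pathAdj adjA z) (X j) (PathSpace adjA A z) s ∧
      ∀ P : Set (Fin m → ℤ), P.Finite →
        ∀ δ : ℕ, 1 ≤ δ → δ ≤ m →
          ∀ φ : (Fin m → ℤ) → α × β,
            DigContinuousOn (cAdj m δ) (NP adjA adjB) P (X j) φ →
            DigHomotopic (cAdj m δ) (NP adjA adjB) P (A ×ˢ B)
              (fun x => (s (φ x) 0, h (s (φ x) (z : ℤ)))) φ}

/-- A digital fibration: a digitally continuous map with the digital homotopy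
lifting property with respect to every digital image `(B, c_δ) ⊆ ℤ^d`. -/
def DigitalFibration {r r' : ℕ} (p p' : ℕ) (A : Set (Fin r → ℤ)) (A' : Set (Fin r' → ℤ))
    (h : (Fin r → ℤ) → (Fin r' → ℤ)) : Prop :=
  DigContinuousOn (cAdj r p) (cAdj r' p') A A' h ∧
  ∀ (d : ℕ) (B : Set (Fin d → ℤ)) (δ : ℕ), 1 ≤ δ → δ ≤ d →
    ∀ k : (Fin d → ℤ) → (Fin r → ℤ),
      DigContinuousOn (cAdj d δ) (cAdj r p) B A k →
      ∀ (z : ℕ) (K : (Fin d → ℤ) → ℤ → (Fin r' → ℤ)),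
        IsDigHomotopy (cAdj d δ) (cAdj r' p') B A' z K →
        (∀ b ∈ B, K b 0 = h (k b)) →
        ∃ K' : (Fin d → ℤ) → ℤ → (Fin r → ℤ),
          IsDigHomotopy (cAdj d δ) (cAdj r p) B A z K' ∧
          (∀ b ∈ B, ∀ t ∈ Set.Icc (0 : ℤ) (z : ℤ), h (K' b t) = K b t) ∧
          (∀ b ∈ B, K' b 0 = k b)

/-- A digital homotopy equivalence `ω : (A, adjA) → (B, adjB)`. -/
def DigHomotopyEquiv {α β : Type*} (adjA : α → α → Prop) (adjB : β → β → Prop)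
    (A : Set α) (B : Set β) (ω : α → β) : Prop :=
  DigContinuousOn adjA adjB A B ω ∧
  ∃ ω' : β → α, DigContinuousOn adjB adjA B A ω' ∧
    DigHomotopic adjA adjA A A (ω' ∘ ω) id ∧
    DigHomotopic adjB adjB B B (ω ∘ ω') id

/-- `D_m(h₁∘β₁, …, h_n∘β_n) ≤ D_m(h₁,…,h_n)` provided that
`β_i ≃ β_{i+1}` for every `i`. -/
theorem digHomotopic_refl {α β : Type*} {adjA : α → α → Prop} {adjB : β → β → Prop}
    {A : Set α} {B : Set β} {f : α → β}
    (hf : DigContinuousOn adjA adjB A B f) :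
    DigHomotopic adjA adjB A B f f := by
  refine ⟨0, fun a _ => f a, ⟨fun t _ => hf, fun a _ t _ t' _ _ => Or.inl rfl⟩,
    fun a _ => rfl, fun a _ => rfl⟩

theorem digHomotopic_symm {α β : Type*} {adjA : α → α → Prop} {adjB : β → β → Prop}
    {A : Set α} {B : Set β} {f g : α → β}
    (hfg : DigHomotopic adjA adjB A B f g) :
    DigHomotopic adjA adjB A B g f := by
  obtain ⟨z, K, ⟨hs, htr⟩, h0, hz⟩ := hfg
  refine ⟨z, fun a t => K a ((z : ℤ) - t), ⟨?_, ?_⟩, ?_, ?_⟩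
  · intro t ht
    obtain ⟨ht0, htz⟩ := ht
    exact hs ((z : ℤ) - t) ⟨by omega, by omega⟩
  · intro a ha t ht t' ht' hadj
    obtain ⟨ht0, htz⟩ := ht
    obtain ⟨ht0', htz'⟩ := ht'
    refine htr a ha ((z:ℤ) - t) ⟨by omega, by omega⟩ ((z:ℤ) - t') ⟨by omega, by omega⟩ ?_
    have : (z:ℤ) - t - ((z:ℤ) - t') = t' - t := by ring
    simp only [intAdj, this, abs_sub_comm]
    exact hadj
  · intro a ha; simpa using hz a ha
  · intro a ha; simpa using h0 a ha

theorem digHomotopic_trans {α β : Type*} {adjA : α → α → Prop} {adjB : β → β → Prop}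
    {A : Set α} {B : Set β} {f g k : α → β}
    (h1 : DigHomotopic adjA adjB A B f g) (h2 : DigHomotopic adjA adjB A B g k) :
    DigHomotopic adjA adjB A B f k := by
  obtain ⟨z1, K1, ⟨hs1, ht1⟩, h10, h1z⟩ := h1
  obtain ⟨z2, K2, ⟨hs2, ht2⟩, h20, h2z⟩ := h2
  refine ⟨z1 + z2, fun a t => if t ≤ (z1 : ℤ) then K1 a t else K2 a (t - z1),
    ⟨?_, ?_⟩, ?_, ?_⟩
  · intro t ht
    obtain ⟨ht0, htz⟩ := ht
    push_cast at htz
    by_cases hle : t ≤ (z1 : ℤ)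
    · simp only [if_pos hle]
      exact hs1 t ⟨ht0, hle⟩
    · simp only [if_neg hle]
      exact hs2 (t - z1) ⟨by omega, by omega⟩
  · intro a ha t ht t' ht' hadj
    obtain ⟨ht0, htz⟩ := ht
    obtain ⟨ht0', htz'⟩ := ht'
    push_cast at htz htz'
    have habs : t - t' = 1 ∨ t - t' = -1 := abs_eq (by norm_num) |>.mp hadj
    by_cases hle : t ≤ (z1 : ℤ) <;> by_cases hle' : t' ≤ (z1 : ℤ) <;>
      simp only [if_pos, if_neg, hle, hle', if_true, if_false]
    · exact ht1 a ha t ⟨ht0, hle⟩ t' ⟨ht0', hle'⟩ hadj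
    · -- t ≤ z1 < t' : t = z1, t' = z1 + 1
      have htz1 : t = (z1 : ℤ) := by omega
      have ht'z1 : t' - z1 = 1 := by omega
      rw [htz1, ht'z1, h1z a ha, ← h20 a ha]
      exact ht2 a ha 0 ⟨le_refl _, by omega⟩ 1 ⟨by norm_num, by omega⟩ (by
        simp [intAdj])
    · -- t' ≤ z1 < t
      have htz1 : t' = (z1 : ℤ) := by omega
      have ht'z1 : t - z1 = 1 := by omega
      rw [htz1, ht'z1, h1z a ha, ← h20 a ha]
      exact ht2 a ha 1 ⟨by norm_num, by omega⟩ 0 ⟨le_refl _, by omega⟩ (by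
        simp [intAdj])
    · refine ht2 a ha (t - z1) ⟨by omega, by omega⟩ (t' - z1) ⟨by omega, by omega⟩ ?_
      simp only [intAdj, sub_sub_sub_cancel_right]
      exact hadj
  · intro a ha
    simp only [if_pos (by positivity : (0:ℤ) ≤ (z1:ℤ))]
    exact h10 a ha
  · intro a ha
    by_cases hle : ((z1 + z2 : ℕ) : ℤ) ≤ (z1 : ℤ)
    · have hz2 : z2 = 0 := by push_cast at hle; omega
      subst hz2
      simp only [if_pos hle]
      have hcast : ((z1 + 0 : ℕ) : ℤ) = (z1 : ℤ) := by push_cast; ring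
      rw [hcast, h1z a ha, ← h20 a ha]
      simpa using h2z a ha
    · simp only [if_neg hle]
      have hcast : ((z1 + z2 : ℕ) : ℤ) - (z1 : ℤ) = (z2 : ℤ) := by push_cast; ring
      rw [hcast]
      exact h2z a ha

theorem digHomotopic_postcomp {α β γ : Type*} {adjA : α → α → Prop} {adjB : β → β → Prop}
    {adjC : γ → γ → Prop} {A : Set α} {B : Set β} {Cs : Set γ} {f g : α → β} {hh : β → γ}
    (hc : DigContinuousOn adjB adjC B Cs hh)
    (hfg : DigHomotopic adjA adjB A B f g) :
    DigHomotopic adjA adjC A Cs (hh ∘ f) (hh ∘ g) := by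
  obtain ⟨z, K, ⟨hs, htr⟩, h0, hz⟩ := hfg
  refine ⟨z, fun a t => hh (K a t), ⟨?_, ?_⟩, ?_, ?_⟩
  · intro t ht
    refine ⟨fun a ha => hc.1 _ ((hs t ht).1 a ha), fun a ha a' ha' hadj => ?_⟩
    rcases (hs t ht).2 a ha a' ha' hadj with he | hadj'
    · exact Or.inl (congrArg hh he)
    · exact hc.2 _ ((hs t ht).1 a ha) _ ((hs t ht).1 a' ha') hadj'
  · intro a ha t ht t' ht' hadj
    rcases htr a ha t ht t' ht' hadj with he | hadj'
    · exact Or.inl (congrArg hh he)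
    · exact hc.2 _ ((hs t ht).1 a ha) _ ((hs t' ht').1 a ha) hadj'
  · intro a ha; simp [h0 a ha]
  · intro a ha; simp [hz a ha]

theorem digHomotopic_precomp {α β γ : Type*} {adjP : α → α → Prop} {adjC : β → β → Prop}
    {adjA : γ → γ → Prop} {P : Set α} {C : Set β} {A : Set γ} {f g : β → γ} {φ : α → β}
    (hφmem : ∀ x ∈ P, φ x ∈ C)
    (hφadj : ∀ x ∈ P, ∀ x' ∈ P, adjP x x' → φ x = φ x' ∨ adjC (φ x) (φ x'))
    (hfg : DigHomotopic adjC adjA C A f g) :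
    DigHomotopic adjP adjA P A (f ∘ φ) (g ∘ φ) := by
  obtain ⟨z, K, ⟨hs, htr⟩, h0, hz⟩ := hfg
  refine ⟨z, fun x t => K (φ x) t, ⟨?_, ?_⟩, ?_, ?_⟩
  · intro t ht
    refine ⟨fun x hx => (hs t ht).1 _ (hφmem x hx), fun x hx x' hx' hadj => ?_⟩
    rcases hφadj x hx x' hx' hadj with he | hadj'
    · exact Or.inl (congrArg (fun b => K b t) he)
    · exact (hs t ht).2 _ (hφmem x hx) _ (hφmem x' hx') hadj'
  · intro x hx t ht t' ht' hadj
    exact htr (φ x) (hφmem x hx) t ht t' ht' hadj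
  · intro x hx; exact h0 _ (hφmem x hx)
  · intro x hx; exact hz _ (hφmem x hx)

theorem dmh_precompose {r s u p q w : ℕ} {n : ℕ}
    (hp1 : 1 ≤ p) (hpr : p ≤ r) (hq1 : 1 ≤ q) (hqs : q ≤ s) (hw1 : 1 ≤ w) (hwu : w ≤ u)
    (A : Set (Fin r → ℤ)) (B : Set (Fin s → ℤ)) (C : Set (Fin u → ℤ))
    (h : Fin n → (Fin r → ℤ) → (Fin s → ℤ))
    (β : Fin n → (Fin u → ℤ) → (Fin r → ℤ))
    (hcont : ∀ i, DigContinuousOn (cAdj r p) (cAdj s q) A B (h i))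
    (βcont : ∀ i, DigContinuousOn (cAdj u w) (cAdj r p) C A (β i))
    (hβ : ∀ i : Fin n, ∀ hi : (i : ℕ) + 1 < n,
      DigHomotopic (cAdj u w) (cAdj r p) C A (β i) (β ⟨(i : ℕ) + 1, hi⟩))
    (m : ℕ) (hm : 0 < m) :
    DmH m (cAdj u w) (cAdj s q) C B (fun i => h i ∘ β i)
      ≤ DmH m (cAdj r p) (cAdj s q) A B h := by
  rcases Nat.eq_zero_or_pos n with hn | hn
  · subst hn
    refine le_trans (sInf_le ?_) zero_le
    refine ⟨0, rfl, fun _ => C, (Set.iUnion_const C).symm, ?_⟩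
    · intro j P hP δ h1 h2 φ hφ i
      exact i.elim0
  · -- n > 0
    apply le_sInf
    rintro k ⟨q', rfl, X, hcover, hX⟩
    apply sInf_le
    set β0 : (Fin u → ℤ) → (Fin r → ℤ) := β ⟨0, hn⟩ with hβ0
    -- chain of homotopies β0 ≃ β i
    have chain : ∀ kk : ℕ, ∀ hk : kk < n,
        DigHomotopic (cAdj u w) (cAdj r p) C A β0 (β ⟨kk, hk⟩) := by
      intro kk
      induction kk with
      | zero => intro hk; exact digHomotopic_refl (βcont _)
      | succ kk ih =>
        intro hk
        exact digHomotopic_trans (ih (Nat.lt_of_succ_lt hk))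
          (hβ ⟨kk, Nat.lt_of_succ_lt hk⟩ hk)
    refine ⟨q', rfl, fun j => C ∩ (β0 ⁻¹' (X j)), ?_, ?_⟩
    · ext c
      constructor
      · intro hc
        have hmem : β0 c ∈ A := (βcont _).1 c hc
        rw [hcover] at hmem
        rcases Set.mem_iUnion.mp hmem with ⟨j, hj⟩
        exact Set.mem_iUnion.mpr ⟨j, hc, hj⟩
      · intro hc
        rcases Set.mem_iUnion.mp hc with ⟨j, hj, _⟩
        exact hj
    · intro j P hPfin δ hδ1 hδm φ hφ i hi
      have φmem : ∀ x ∈ P, φ x ∈ C := fun x hx => (hφ.1 x hx).1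
      have φadj : ∀ x ∈ P, ∀ x' ∈ P, cAdj m δ x x' →
          φ x = φ x' ∨ cAdj u w (φ x) (φ x') := hφ.2
      -- β0 ∘ φ is continuous into X j
      have hβ0φ : DigContinuousOn (cAdj m δ) (cAdj r p) P (X j) (β0 ∘ φ) := by
        refine ⟨fun x hx => (hφ.1 x hx).2, fun x hx x' hx' hadj => ?_⟩
        rcases φadj x hx x' hx' hadj with he | hadj'
        · exact Or.inl (by simp [Function.comp, he])
        · exact (βcont ⟨0, hn⟩).2 _ (φmem x hx) _ (φmem x' hx') hadj'
      set i' : Fin n := ⟨(i : ℕ) + 1, hi⟩ with hi'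
      have H1 : DigHomotopic (cAdj m δ) (cAdj s q) P B ((h i ∘ β i) ∘ φ)
          ((h i ∘ β0) ∘ φ) :=
        digHomotopic_precomp φmem φadj
          (digHomotopic_postcomp (hcont i) (digHomotopic_symm (chain (i : ℕ) i.isLt)))
      have H2 : DigHomotopic (cAdj m δ) (cAdj s q) P B (h i ∘ (β0 ∘ φ))
          (h i' ∘ (β0 ∘ φ)) :=
        hX j P hPfin δ hδ1 hδm (β0 ∘ φ) hβ0φ i hi
      have H3 : DigHomotopic (cAdj m δ) (cAdj s q) P B ((h i' ∘ β0) ∘ φ)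
          ((h i' ∘ β i') ∘ φ) :=
        digHomotopic_precomp φmem φadj
          (digHomotopic_postcomp (hcont i') (chain ((i : ℕ) + 1) hi))
      exact digHomotopic_trans (digHomotopic_trans H1 H2) H3

end DigitalTop
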